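/- Let W ∈ ℝ^{N×N} be a symmetric nonnegative weight matrix whose associated unweighted graph (i ∼ j iff W(i,j) ≠ 0) is connected, with minimum edge weight w_min > 0 and unweighted geodesic distance D(i,j). Let u₁,…,u_N ∈ ℝ^N be an orthonormal set, and for n = 1,…,N let T_n = Σ_{i∼j} W(i,j)(u_n(i) − u_n(j))² be the total variation of u_n. Let {1,…,N} be partitioned into K pairwise disjoint nonempty vertex sets V₁,…,V_K, let g₁,…,g_K ∈ ℝ^N with G_k = diag(g_k), and assume there exist δ, μ, γ > 0 such that |g_m(i)| ≤ δ for all i ∈ V_k with k ≠ m, and μ ≤ g_k(i) ≤ γ for all i ∈ V_k. Let h₁,…,h_K ∈ ℝ^N with ‖h_k‖₂ = 1 and, for some cutoff κ ∈ {1,…,N}, h_k(i) = 0 whenever i > κ, for all k. Set C_{km} = Σ_{n=1}^N h_k(n) h_m(n) u_n u_nᵀ, C_{x_k} = C_{kk}, C_x = Σ_{k=1}^K Σ_{m=1}^K G_k C_{km} G_mᵀ, and σ_k² = Σ_{i ∈ V_k} C_{x_k}(i,i). Then (1/(N² μ²)) Σ_{k=1}^K Σ_{(i,j) ∈ V_k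 × V_k} |C_x(i,j)| ≥ (1/N²) Σ_{k=1}^K |V_k| σ_k² − (1/(2 N² w_min)) Σ_{k=1}^K Σ_{(i,j) ∈ V_k × V_k} D(i,j)² · (Σ_{n=1}^κ T_n) − (1/N²) (Σ_{k=1}^K |V_k|²) · (2(K−1)(δ/μ) + (K−1)²(δ/μ)²). -/

import Mathlib

open Matrix

lemma aux_cs_step (a s L Q : ℝ) (hL0 : 0 ≤ L) (hQ0 : 0 ≤ Q) (ih : s ^ 2 ≤ L * Q) :
    (a + s) ^ 2 ≤ (L + 1) * (a ^ 2 + Q) := by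
  rcases eq_or_lt_of_le hL0 with hL1 | hL1
  · have hs0 : s = 0 := by nlinarith [sq_nonneg s]
    subst hs0
    nlinarith [hQ0, hL0, sq_nonneg a]
  · have key : 0 ≤ L * ((L + 1) * (a ^ 2 + Q) - (a + s) ^ 2) := by
      nlinarith [sq_nonneg (L * a - s), ih, hQ0, mul_le_mul_of_nonneg_left ih hL0]
    nlinarith [nonneg_of_mul_nonneg_right key hL1]

lemma walk_sq_bound {α : Type*} {G : SimpleGraph α} (f : α → ℝ) :
    ∀ {i j : α} (p : G.Walk i j),
      (f i - f j) ^ 2 ≤ (p.length : ℝ) *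
        (p.darts.map (fun d => (f d.fst - f d.snd) ^ 2)).sum := by
  intro i j p
  induction p with
  | nil => simp
  | @cons i b j hadj q ih =>
    rw [SimpleGraph.Walk.darts_cons, SimpleGraph.Walk.length_cons, List.map_cons, List.sum_cons]
    have hQ0 : 0 ≤ (q.darts.map (fun d => (f d.fst - f d.snd) ^ 2)).sum := by
      apply List.sum_nonneg
      intro x hx
      simp only [List.mem_map] at hx
      obtain ⟨d, _, rfl⟩ := hx
      positivity
    have key := aux_cs_step (f i - f b) (f b - f j) (q.length : ℝ)
      ((q.darts.map (fun d => (f d.fst - f d.snd) ^ 2)).sum) (by positivity) hQ0 ih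
    push_cast
    calc (f i - f j) ^ 2 = ((f i - f b) + (f b - f j)) ^ 2 := by ring
      _ ≤ _ := by
          refine le_trans key (le_of_eq ?_)
          ring

lemma darts_sum_le_T {N : ℕ} (W : Matrix (Fin N) (Fin N) ℝ)
    (hsymm : W.IsSymm) (hnonneg : ∀ i j, 0 ≤ W i j)
    {G : SimpleGraph (Fin N)}
    (hG : G = SimpleGraph.fromRel (fun i j => W i j ≠ 0))
    {wmin : ℝ} (hwmin : ∀ i j, W i j ≠ 0 → wmin ≤ W i j)
    (f : Fin N → ℝ) {i j : Fin N} (p : G.Walk i j) (hp : p.IsPath) :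
    (p.darts.map (fun d => wmin * (f d.fst - f d.snd) ^ 2)).sum
      ≤ ∑ a, ∑ b, (if a < b ∧ W a b ≠ 0 then W a b * (f a - f b) ^ 2 else 0) := by
  classical
  have hsym' : ∀ a b, W a b = W b a := fun a b => congrFun (congrFun hsymm b) a
  set F : Fin N × Fin N → ℝ :=
    fun q => if q.1 < q.2 ∧ W q.1 q.2 ≠ 0 then W q.1 q.2 * (f q.1 - f q.2) ^ 2 else 0 with hF
  set o : G.Dart → Fin N × Fin N :=
    fun d => if d.fst < d.snd then (d.fst, d.snd) else (d.snd, d.fst) with ho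
  have hWadj : ∀ d : G.Dart, W d.fst d.snd ≠ 0 := by
    intro d
    have hadj : (SimpleGraph.fromRel (fun i j : Fin N => W i j ≠ 0)).Adj d.fst d.snd :=
      hG ▸ d.adj
    rw [SimpleGraph.fromRel_adj] at hadj
    rcases hadj.2 with h1 | h1
    · exact h1
    · intro hc; apply h1; rw [← hsym']; exact hc
  have hFnonneg : ∀ q, 0 ≤ F q := by
    intro q
    rw [hF]
    dsimp only
    split
    · exact mul_nonneg (hnonneg _ _) (sq_nonneg _)
    · exact le_refl 0
  have step1 : ∀ d ∈ p.darts, wmin * (f d.fst - f d.snd) ^ 2 ≤ F (o d) := by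
    intro d _
    rw [hF, ho]
    dsimp only
    by_cases hlt : d.fst < d.snd
    · rw [if_pos hlt]
      dsimp only
      rw [if_pos ⟨hlt, hWadj d⟩]
      exact mul_le_mul_of_nonneg_right (hwmin _ _ (hWadj d)) (sq_nonneg _)
    · have hlt' : d.snd < d.fst := lt_of_le_of_ne (not_lt.mp hlt) d.snd_ne_fst
      rw [if_neg hlt]
      dsimp only
      have hW' : W d.snd d.fst ≠ 0 := by rw [← hsym']; exact hWadj d
      rw [if_pos ⟨hlt', hW'⟩]
      have e1 : (f d.snd - f d.fst) ^ 2 = (f d.fst - f d.snd) ^ 2 := by ring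
      rw [e1, ← hsym']
      exact mul_le_mul_of_nonneg_right (hwmin _ _ (hWadj d)) (sq_nonneg _)
  have hnodup : (p.darts.map o).Nodup := by
    have hen : p.edges.Nodup := hp.edges_nodup
    have heq : (p.darts.map o).map (fun q : Fin N × Fin N => s(q.1, q.2)) = p.edges := by
      rw [List.map_map]
      apply List.map_congr_left
      intro d _
      rw [ho]
      dsimp only [Function.comp]
      by_cases hlt : d.fst < d.snd
      · rw [if_pos hlt]; rfl
      · rw [if_neg hlt]
        exact Sym2.eq_swap
    rw [← heq] at hen
    exact hen.of_map _
  calc (p.darts.map (fun d => wmin * (f d.fst - f d.snd) ^ 2)).sum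
      ≤ (p.darts.map (fun d => F (o d))).sum := List.sum_le_sum step1
    _ = ((p.darts.map o).map F).sum := by rw [List.map_map]; rfl
    _ = ∑ q ∈ (p.darts.map o).toFinset, F q := (List.sum_toFinset F hnodup).symm
    _ ≤ ∑ q : Fin N × Fin N, F q :=
        Finset.sum_le_sum_of_subset_of_nonneg (Finset.subset_univ _) (fun q _ _ => hFnonneg q)
    _ = ∑ a, ∑ b, (if a < b ∧ W a b ≠ 0 then W a b * (f a - f b) ^ 2 else 0) := by
        rw [Fintype.sum_prod_type]

lemma dist_sq_bound {N : ℕ} (W : Matrix (Fin N) (Fin N) ℝ)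
    (hsymm : W.IsSymm) (hnonneg : ∀ i j, 0 ≤ W i j)
    {G : SimpleGraph (Fin N)}
    (hG : G = SimpleGraph.fromRel (fun i j => W i j ≠ 0))
    (hconn : G.Connected)
    {wmin : ℝ} (hwpos : 0 < wmin) (hwmin : ∀ i j, W i j ≠ 0 → wmin ≤ W i j)
    (f : Fin N → ℝ) (i j : Fin N) :
    wmin * (f i - f j) ^ 2 ≤ (G.dist i j : ℝ) ^ 2 *
      (∑ a, ∑ b, (if a < b ∧ W a b ≠ 0 then W a b * (f a - f b) ^ 2 else 0)) := by
  obtain ⟨p, hp, hlen⟩ := hconn.exists_path_of_dist i j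
  set Tn : ℝ := ∑ a, ∑ b, (if a < b ∧ W a b ≠ 0 then W a b * (f a - f b) ^ 2 else 0) with hTn
  have hTn0 : 0 ≤ Tn := by
    apply Finset.sum_nonneg
    intro a _
    apply Finset.sum_nonneg
    intro b _
    split
    · exact mul_nonneg (hnonneg _ _) (sq_nonneg _)
    · exact le_refl 0
  have h1 := walk_sq_bound f p
  have h2 := darts_sum_le_T W hsymm hnonneg hG hwmin f p hp
  have h3 : (p.darts.map (fun d => wmin * (f d.fst - f d.snd) ^ 2)).sum
      = wmin * (p.darts.map (fun d => (f d.fst - f d.snd) ^ 2)).sum := by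
    rw [← List.sum_map_mul_left]
  have hlcast : ((p.length : ℝ)) ≤ ((p.length : ℝ)) ^ 2 := by
    have : p.length ≤ p.length ^ 2 := Nat.le_self_pow two_ne_zero _
    exact_mod_cast this
  have hchain : wmin * (f i - f j) ^ 2 ≤ ((p.length : ℝ)) ^ 2 * Tn := by
    calc wmin * (f i - f j) ^ 2
        ≤ wmin * ((p.length : ℝ) *
            (p.darts.map (fun d => (f d.fst - f d.snd) ^ 2)).sum) :=
          mul_le_mul_of_nonneg_left h1 hwpos.le
      _ = (p.length : ℝ) * (p.darts.map (fun d => wmin * (f d.fst - f d.snd) ^ 2)).sum := by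
          rw [h3]; ring
      _ ≤ (p.length : ℝ) * Tn :=
          mul_le_mul_of_nonneg_left h2 (by positivity)
      _ ≤ ((p.length : ℝ)) ^ 2 * Tn := mul_le_mul_of_nonneg_right hlcast hTn0
  rw [← hlen]
  exact hchain

/-- Theorem 4: lower bound on the average within-subgraph covariance magnitude of an
LSGP with localized memberships and band-limited kernels. -/
theorem lsgp_within_subgraph_covariance_lower_bound
    {N K : ℕ} (W : Matrix (Fin N) (Fin N) ℝ)
    (hsymm : W.IsSymm) (hnonneg : ∀ i j, 0 ≤ W i j)
    (G : SimpleGraph (Fin N))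
    (hG : G = SimpleGraph.fromRel (fun i j => W i j ≠ 0))
    (hconn : G.Connected)
    (wmin : ℝ) (hwpos : 0 < wmin)
    (hwmin : IsLeast {w : ℝ | ∃ i j, W i j ≠ 0 ∧ w = W i j} wmin)
    (u : Fin N → Fin N → ℝ)
    (hu : ∀ n m, u n ⬝ᵥ u m = if n = m then (1 : ℝ) else 0)
    (T : Fin N → ℝ)
    (hT : ∀ n, T n = ∑ i, ∑ j, if i < j ∧ W i j ≠ 0 then W i j * (u n i - u n j) ^ 2 else 0)
    (V : Fin K → Finset (Fin N))
    (hdisj : ∀ k m, k ≠ m → Disjoint (V k) (V m))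
    (hne : ∀ k, (V k).Nonempty)
    (hcover : ∀ i : Fin N, ∃ k, i ∈ V k)
    (g : Fin K → Fin N → ℝ)
    (δ μ γ : ℝ) (hδ : 0 < δ) (hμ : 0 < μ) (hγ : 0 < γ)
    (hoff : ∀ k m, k ≠ m → ∀ i ∈ V k, |g m i| ≤ δ)
    (hlow : ∀ k, ∀ i ∈ V k, μ ≤ g k i)
    (hhigh : ∀ k, ∀ i ∈ V k, g k i ≤ γ)
    (h : Fin K → Fin N → ℝ) (hh : ∀ k, ∑ i, (h k i) ^ 2 = 1)
    (κ : ℕ) (hκ1 : 1 ≤ κ) (hκN : κ ≤ N)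
    (hband : ∀ k, ∀ i : Fin N, κ ≤ (i : ℕ) → h k i = 0)
    (Ckm : Fin K → Fin K → Matrix (Fin N) (Fin N) ℝ)
    (hCkm : ∀ k m, Ckm k m = ∑ n, (h k n * h m n) • Matrix.vecMulVec (u n) (u n))
    (Cx : Matrix (Fin N) (Fin N) ℝ)
    (hCx : Cx = ∑ k, ∑ m, Matrix.diagonal (g k) * Ckm k m * (Matrix.diagonal (g m))ᵀ)
    (σsq : Fin K → ℝ)
    (hσsq : ∀ k, σsq k = ∑ i ∈ V k, Ckm k k i i) :
    (1 / ((N : ℝ) ^ 2 * μ ^ 2)) * ∑ k, ∑ i ∈ V k, ∑ j ∈ V k, |Cx i j|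
      ≥ (1 / (N : ℝ) ^ 2) * ∑ k, ((V k).card : ℝ) * σsq k
        - (1 / (2 * (N : ℝ) ^ 2 * wmin)) *
            ∑ k, ∑ i ∈ V k, ∑ j ∈ V k,
              (G.dist i j : ℝ) ^ 2 *
                (∑ n ∈ Finset.univ.filter (fun n : Fin N => (n : ℕ) < κ), T n)
        - (1 / (N : ℝ) ^ 2) * (∑ k, ((V k).card : ℝ) ^ 2) *
            (2 * ((K : ℝ) - 1) * (δ / μ) + ((K : ℝ) - 1) ^ 2 * (δ / μ) ^ 2) := by
  classical
  have hN : 0 < N := Fin.pos_iff_nonempty.mpr hconn.nonempty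
  obtain ⟨k0, _⟩ := hcover ⟨0, hN⟩
  have hK : 0 < K := Fin.pos_iff_nonempty.mpr ⟨k0⟩
  have hwmin' : ∀ i j, W i j ≠ 0 → wmin ≤ W i j := fun i j hij => hwmin.2 ⟨i, j, hij, rfl⟩
  set Sτ : ℝ := ∑ n ∈ Finset.univ.filter (fun n : Fin N => (n : ℕ) < κ), T n with hSτ
  set E : ℝ := 2 * ((K : ℝ) - 1) * (δ / μ) + ((K : ℝ) - 1) ^ 2 * (δ / μ) ^ 2 with hE
  -- orthonormal columns
  have hUtU : ∀ a b, (∑ n, u n a * u n b) = if a = b then (1:ℝ) else 0 := by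
    have hUU : (Matrix.of u) * (Matrix.of u)ᵀ = 1 := by
      ext n m
      have := hu n m
      simpa [Matrix.mul_apply, dotProduct, Matrix.one_apply] using this
    have h2 := mul_eq_one_comm.mp hUU
    intro a b
    have := congrFun (congrFun h2 a) b
    simpa [Matrix.mul_apply, Matrix.one_apply] using this
  have hcol : ∀ a, ∑ n, (u n a) ^ 2 = 1 := by
    intro a
    have h2 := hUtU a a
    rw [if_pos rfl] at h2
    rw [← h2]
    apply Finset.sum_congr rfl
    intros; ring
  have hsq1 : ∀ k n, (h k n) ^ 2 ≤ 1 := by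
    intro k n
    rw [← hh k]
    exact Finset.single_le_sum (f := fun i => (h k i) ^ 2) (fun i _ => sq_nonneg (h k i)) (Finset.mem_univ n)
  have hCent : ∀ k m a b, Ckm k m a b = ∑ n, h k n * h m n * (u n a * u n b) := by
    intro k m a b
    rw [hCkm]
    simp [Matrix.sum_apply, Matrix.vecMulVec_apply]
  -- |Ckm| ≤ 1
  have hCbound : ∀ k m a b, |Ckm k m a b| ≤ 1 := by
    intro k m a b
    have hfac : ∀ k' a', ∑ n, (h k' n * u n a') ^ 2 ≤ 1 := by
      intro k' a'
      rw [← hcol a']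
      apply Finset.sum_le_sum
      intro n _
      rw [mul_pow]
      exact mul_le_of_le_one_left (sq_nonneg _) (hsq1 k' n)
    have hre : Ckm k m a b = ∑ n, (h k n * u n a) * (h m n * u n b) := by
      rw [hCent]
      apply Finset.sum_congr rfl
      intros; ring
    have hcs := Finset.sum_mul_sq_le_sq_mul_sq Finset.univ
      (fun n => h k n * u n a) (fun n => h m n * u n b)
    have hsqle : (Ckm k m a b) ^ 2 ≤ 1 := by
      rw [hre]
      calc (∑ n, (h k n * u n a) * (h m n * u n b)) ^ 2
          ≤ (∑ n, (h k n * u n a) ^ 2) * (∑ n, (h m n * u n b) ^ 2) := hcs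
        _ ≤ 1 := by
            have h1 := hfac k a
            have h2 := hfac m b
            have h1' : 0 ≤ ∑ n, (h k n * u n a) ^ 2 :=
              Finset.sum_nonneg fun n _ => sq_nonneg _
            have h2' : 0 ≤ ∑ n, (h m n * u n b) ^ 2 :=
              Finset.sum_nonneg fun n _ => sq_nonneg _
            nlinarith
    exact (sq_le_one_iff_abs_le_one _).mp hsqle
  -- identity
  have hCiden : ∀ k a b, Ckm k k a a + Ckm k k b b - 2 * Ckm k k a b
      = ∑ n, (h k n) ^ 2 * (u n a - u n b) ^ 2 := by
    intro k a b
    rw [hCent, hCent, hCent, Finset.mul_sum, ← Finset.sum_add_distrib, ← Finset.sum_sub_distrib]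
    apply Finset.sum_congr rfl
    intros; ring
  have hTnonneg : ∀ n, 0 ≤ T n := by
    intro n
    rw [hT]
    apply Finset.sum_nonneg
    intro a _
    apply Finset.sum_nonneg
    intro b _
    split
    · exact mul_nonneg (hnonneg _ _) (sq_nonneg _)
    · exact le_refl 0
  have hSτ0 : 0 ≤ Sτ := Finset.sum_nonneg fun n _ => hTnonneg n
  -- band-limited quadratic bound
  have hQle : ∀ k a b, ∑ n, (h k n) ^ 2 * (u n a - u n b) ^ 2
      ≤ (G.dist a b : ℝ) ^ 2 * Sτ / wmin := by
    intro k a b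
    have hsplit := Finset.sum_filter_add_sum_filter_not Finset.univ
      (fun n : Fin N => (n : ℕ) < κ) (fun n => (h k n) ^ 2 * (u n a - u n b) ^ 2)
    have hzero : ∑ n ∈ Finset.univ.filter (fun n : Fin N => ¬ (n : ℕ) < κ),
        (h k n) ^ 2 * (u n a - u n b) ^ 2 = 0 := by
      apply Finset.sum_eq_zero
      intro n hn
      rw [Finset.mem_filter] at hn
      rw [hband k n (not_lt.mp hn.2)]
      ring
    have hmain : ∑ n ∈ Finset.univ.filter (fun n : Fin N => (n : ℕ) < κ),
        (h k n) ^ 2 * (u n a - u n b) ^ 2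
        ≤ ∑ n ∈ Finset.univ.filter (fun n : Fin N => (n : ℕ) < κ),
            (G.dist a b : ℝ) ^ 2 * T n / wmin := by
      apply Finset.sum_le_sum
      intro n _
      have hd := dist_sq_bound W hsymm hnonneg hG hconn hwpos hwmin' (u n) a b
      rw [← hT n] at hd
      have h1 : (u n a - u n b) ^ 2 ≤ (G.dist a b : ℝ) ^ 2 * T n / wmin := by
        rw [le_div_iff₀ hwpos]
        linarith [hd]
      calc (h k n) ^ 2 * (u n a - u n b) ^ 2
          ≤ 1 * (u n a - u n b) ^ 2 :=
            mul_le_mul_of_nonneg_right (hsq1 k n) (sq_nonneg _)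
        _ = (u n a - u n b) ^ 2 := one_mul _
        _ ≤ (G.dist a b : ℝ) ^ 2 * T n / wmin := h1
    calc ∑ n, (h k n) ^ 2 * (u n a - u n b) ^ 2
        = (∑ n ∈ Finset.univ.filter (fun n : Fin N => (n : ℕ) < κ),
            (h k n) ^ 2 * (u n a - u n b) ^ 2) := by rw [← hsplit, hzero, add_zero]
      _ ≤ ∑ n ∈ Finset.univ.filter (fun n : Fin N => (n : ℕ) < κ),
            (G.dist a b : ℝ) ^ 2 * T n / wmin := hmain
      _ = (G.dist a b : ℝ) ^ 2 * Sτ / wmin := by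
          rw [hSτ, Finset.mul_sum, Finset.sum_div]
  -- pointwise bound P2
  have hP2 : ∀ k a b, (Ckm k k a a + Ckm k k b b) / 2
      - (G.dist a b : ℝ) ^ 2 * Sτ / (2 * wmin) ≤ |Ckm k k a b| := by
    intro k a b
    have hid := hCiden k a b
    have hq := hQle k a b
    have habs := le_abs_self (Ckm k k a b)
    have hw : (G.dist a b : ℝ) ^ 2 * Sτ / (2 * wmin)
        = ((G.dist a b : ℝ) ^ 2 * Sτ / wmin) / 2 := by
      ring
    rw [hw]
    linarith
  -- Cx entry
  have hCxent : ∀ a b, Cx a b = ∑ p : Fin K × Fin K, g p.1 a * Ckm p.1 p.2 a b * g p.2 b := by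
    intro a b
    rw [hCx, Fintype.sum_prod_type]
    simp [Matrix.sum_apply, Matrix.diagonal_transpose, Matrix.diagonal_mul, Matrix.mul_diagonal]
  -- weight-counting sum
  have hcard : ∀ k0 : Fin K, ∑ x : Fin K, (if x = k0 then (1:ℝ) else δ/μ)
      = 1 + ((K:ℝ) - 1) * (δ/μ) := by
    intro k0
    have : ∀ x : Fin K, (if x = k0 then (1:ℝ) else δ/μ)
        = (if x = k0 then (1 - δ/μ : ℝ) else 0) + δ/μ := by
      intro x; split <;> ring
    rw [Finset.sum_congr rfl (fun x _ => this x), Finset.sum_add_distrib,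
      Finset.sum_ite_eq' Finset.univ k0 (fun _ => (1 - δ/μ : ℝ))]
    simp [Finset.card_univ]
    ring
  have hBsum : ∀ k : Fin K, ∑ p ∈ Finset.univ.erase ((k, k) : Fin K × Fin K),
      ((if p.1 = k then (1:ℝ) else δ/μ) * (if p.2 = k then 1 else δ/μ)) = E := by
    intro k
    rw [Finset.sum_erase_eq_sub (Finset.mem_univ _)]
    have htot : ∑ p : Fin K × Fin K,
        ((if p.1 = k then (1:ℝ) else δ/μ) * (if p.2 = k then 1 else δ/μ))
        = (1 + ((K:ℝ) - 1) * (δ/μ)) * (1 + ((K:ℝ) - 1) * (δ/μ)) := by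
      rw [Fintype.sum_prod_type, ← hcard k]
      rw [Finset.sum_mul_sum Finset.univ Finset.univ
        (fun x : Fin K => if x = k then (1:ℝ) else δ/μ)
        (fun y : Fin K => if y = k then (1:ℝ) else δ/μ)]
    rw [htot]
    have hfkk : ((if ((k,k) : Fin K × Fin K).1 = k then (1:ℝ) else δ/μ) *
        (if ((k,k) : Fin K × Fin K).2 = k then 1 else δ/μ)) = 1 := by norm_num
    rw [hfkk, hE]
    ring
  -- pointwise bound P1
  have hP1 : ∀ k, ∀ a ∈ V k, ∀ b ∈ V k, μ ^ 2 * (|Ckm k k a b| - E) ≤ |Cx a b| := by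
    intro k a ha b hb
    have hga : μ ≤ g k a := hlow k a ha
    have hgb : μ ≤ g k b := hlow k b hb
    have hgap : 0 < g k a := lt_of_lt_of_le hμ hga
    have hgbp : 0 < g k b := lt_of_lt_of_le hμ hgb
    set t : Fin K × Fin K → ℝ := fun p => g p.1 a * Ckm p.1 p.2 a b * g p.2 b with ht
    have hsum : Cx a b = t (k, k) + ∑ p ∈ Finset.univ.erase ((k,k) : Fin K × Fin K), t p := by
      rw [hCxent a b]
      exact (Finset.add_sum_erase _ t (Finset.mem_univ _)).symm
    have ht0 : |t (k, k)| = g k a * g k b * |Ckm k k a b| := by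
      rw [ht]
      dsimp only
      rw [abs_mul, abs_mul, abs_of_pos hgap, abs_of_pos hgbp]
      ring
    have hkey_b : δ ≤ (δ/μ) * g k b := by
      have := mul_le_mul_of_nonneg_left hgb (le_of_lt (div_pos hδ hμ))
      rwa [div_mul_cancel₀ δ (ne_of_gt hμ)] at this
    have hkey_a : δ ≤ (δ/μ) * g k a := by
      have := mul_le_mul_of_nonneg_left hga (le_of_lt (div_pos hδ hμ))
      rwa [div_mul_cancel₀ δ (ne_of_gt hμ)] at this
    have hterm : ∀ p ∈ Finset.univ.erase ((k,k) : Fin K × Fin K),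
        |t p| ≤ g k a * g k b * ((if p.1 = k then (1:ℝ) else δ/μ) *
          (if p.2 = k then 1 else δ/μ)) := by
      intro p hp
      have hpne : p ≠ (k, k) := (Finset.mem_erase.mp hp).1
      have hCp := hCbound p.1 p.2 a b
      have hCp0 := abs_nonneg (Ckm p.1 p.2 a b)
      have hCpk2 := hCbound k p.2 a b
      have hCpk20 := abs_nonneg (Ckm k p.2 a b)
      have hCpk1 := hCbound p.1 k a b
      have hCpk10 := abs_nonneg (Ckm p.1 k a b)
      have htabs : |t p| = |g p.1 a| * |Ckm p.1 p.2 a b| * |g p.2 b| := by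
        rw [ht]; dsimp only; rw [abs_mul, abs_mul]
      by_cases h1 : p.1 = k
      · by_cases h2 : p.2 = k
        · exact absurd (Prod.ext h1 h2) hpne
        · have hob : |g p.2 b| ≤ δ := hoff k p.2 (fun hc => h2 hc.symm) b hb
          rw [htabs, if_pos h1, if_neg h2, h1, abs_of_pos hgap]
          have hb0 := abs_nonneg (g p.2 b)
          have hCp0' := abs_nonneg (Ckm p.1 p.2 a b)
          calc g k a * |Ckm k p.2 a b| * |g p.2 b|
              ≤ (g k a * 1) * δ :=
                mul_le_mul (mul_le_mul_of_nonneg_left hCpk2 hgap.le) hob hb0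
                  (by positivity)
            _ = g k a * δ := by ring
            _ ≤ g k a * ((δ/μ) * g k b) := mul_le_mul_of_nonneg_left hkey_b hgap.le
            _ = g k a * g k b * (1 * (δ/μ)) := by ring
      · by_cases h2 : p.2 = k
        · have hoa : |g p.1 a| ≤ δ := hoff k p.1 (fun hc => h1 hc.symm) a ha
          rw [htabs, if_neg h1, if_pos h2, h2, abs_of_pos hgbp]
          have ha0 := abs_nonneg (g p.1 a)
          calc |g p.1 a| * |Ckm p.1 k a b| * g k b
              ≤ (δ * 1) * g k b :=
                mul_le_mul_of_nonneg_right (mul_le_mul hoa hCpk1 hCpk10 hδ.le) hgbp.le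
            _ = δ * g k b := by ring
            _ ≤ ((δ/μ) * g k a) * g k b := mul_le_mul_of_nonneg_right hkey_a hgbp.le
            _ = g k a * g k b * ((δ/μ) * 1) := by ring
        · have hoa : |g p.1 a| ≤ δ := hoff k p.1 (fun hc => h1 hc.symm) a ha
          have hob : |g p.2 b| ≤ δ := hoff k p.2 (fun hc => h2 hc.symm) b hb
          rw [htabs, if_neg h1, if_neg h2]
          have ha0 := abs_nonneg (g p.1 a)
          have hb0 := abs_nonneg (g p.2 b)
          calc |g p.1 a| * |Ckm p.1 p.2 a b| * |g p.2 b|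
              ≤ ((δ * 1)) * δ :=
                mul_le_mul (mul_le_mul hoa hCp hCp0 hδ.le) hob hb0 (by positivity)
            _ = δ * δ := by ring
            _ ≤ ((δ/μ) * g k a) * ((δ/μ) * g k b) :=
                mul_le_mul hkey_a hkey_b hδ.le (by positivity)
            _ = g k a * g k b * ((δ/μ) * (δ/μ)) := by ring
    have hrest : ∑ p ∈ Finset.univ.erase ((k,k) : Fin K × Fin K), |t p|
        ≤ g k a * g k b * E := by
      calc ∑ p ∈ Finset.univ.erase ((k,k) : Fin K × Fin K), |t p|
          ≤ ∑ p ∈ Finset.univ.erase ((k,k) : Fin K × Fin K),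
              g k a * g k b * ((if p.1 = k then (1:ℝ) else δ/μ) *
                (if p.2 = k then 1 else δ/μ)) := Finset.sum_le_sum hterm
        _ = g k a * g k b * E := by rw [← Finset.mul_sum, hBsum k]
    have habs2 : g k a * g k b * |Ckm k k a b| - g k a * g k b * E ≤ |Cx a b| := by
      have h1 : |t (k,k)| ≤ |Cx a b| + |∑ p ∈ Finset.univ.erase ((k,k) : Fin K × Fin K), t p| := by
        have he : t (k,k) = Cx a b + (- ∑ p ∈ Finset.univ.erase ((k,k) : Fin K × Fin K), t p) := by
          rw [hsum]; ring
        rw [he]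
        exact le_trans (abs_add_le _ _) (le_of_eq (by rw [abs_neg]))
      have h2 : |∑ p ∈ Finset.univ.erase ((k,k) : Fin K × Fin K), t p|
          ≤ ∑ p ∈ Finset.univ.erase ((k,k) : Fin K × Fin K), |t p| :=
        Finset.abs_sum_le_sum_abs _ _
      rw [ht0] at h1
      linarith
    rcases le_or_gt 0 (|Ckm k k a b| - E) with hX | hX
    · have hμ2 : μ ^ 2 ≤ g k a * g k b := by
        have := mul_le_mul hga hgb hμ.le hgap.le
        calc μ ^ 2 = μ * μ := sq μ
          _ ≤ g k a * g k b := this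
      have hfin : μ ^ 2 * (|Ckm k k a b| - E) ≤ g k a * g k b * (|Ckm k k a b| - E) :=
        mul_le_mul_of_nonneg_right hμ2 hX
      rw [mul_sub] at hfin
      linarith [habs2, hfin]
    · have hneg : μ ^ 2 * (|Ckm k k a b| - E) < 0 :=
        mul_neg_of_pos_of_neg (pow_pos hμ 2) hX
      linarith [abs_nonneg (Cx a b)]
  -- combined pointwise bound
  have hPW : ∀ k, ∀ a ∈ V k, ∀ b ∈ V k,
      μ ^ 2 * ((Ckm k k a a + Ckm k k b b) / 2
        - (G.dist a b : ℝ) ^ 2 * Sτ / (2 * wmin) - E) ≤ |Cx a b| := by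
    intro k a ha b hb
    have h1 := hP1 k a ha b hb
    have h2 := hP2 k a b
    have h3 : μ ^ 2 * ((Ckm k k a a + Ckm k k b b) / 2
        - (G.dist a b : ℝ) ^ 2 * Sτ / (2 * wmin) - E) ≤ μ ^ 2 * (|Ckm k k a b| - E) := by
      apply mul_le_mul_of_nonneg_left _ (sq_nonneg μ)
      linarith
    exact le_trans h3 h1
  -- per-k sum bound
  have hsumk : ∀ k, μ ^ 2 * (((V k).card : ℝ) * σsq k
      - (1 / (2 * wmin)) * (∑ a ∈ V k, ∑ b ∈ V k, (G.dist a b : ℝ) ^ 2 * Sτ)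
      - ((V k).card : ℝ) ^ 2 * E)
      ≤ ∑ a ∈ V k, ∑ b ∈ V k, |Cx a b| := by
    intro k
    have hle : ∑ a ∈ V k, ∑ b ∈ V k, μ ^ 2 * ((Ckm k k a a + Ckm k k b b) / 2
        - (G.dist a b : ℝ) ^ 2 * Sτ / (2 * wmin) - E)
        ≤ ∑ a ∈ V k, ∑ b ∈ V k, |Cx a b| := by
      apply Finset.sum_le_sum
      intro a ha
      apply Finset.sum_le_sum
      intro b hb
      exact hPW k a ha b hb
    refine le_trans (le_of_eq ?_) hle
    rw [hσsq k]
    have h1 : ∀ a ∈ V k, ∑ b ∈ V k, μ ^ 2 * ((Ckm k k a a + Ckm k k b b) / 2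
        - (G.dist a b : ℝ) ^ 2 * Sτ / (2 * wmin) - E)
        = ((V k).card : ℝ) * (μ ^ 2 / 2 * Ckm k k a a)
          + μ ^ 2 / 2 * (∑ b ∈ V k, Ckm k k b b)
          - μ ^ 2 / (2 * wmin) * (∑ b ∈ V k, (G.dist a b : ℝ) ^ 2 * Sτ)
          - ((V k).card : ℝ) * (μ ^ 2 * E) := by
      intro a _
      rw [Finset.sum_congr rfl (fun b _ => show μ ^ 2 * ((Ckm k k a a + Ckm k k b b) / 2
        - (G.dist a b : ℝ) ^ 2 * Sτ / (2 * wmin) - E)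
        = μ ^ 2 * Ckm k k a a / 2 + μ ^ 2 / 2 * Ckm k k b b
          - μ ^ 2 / (2 * wmin) * ((G.dist a b : ℝ) ^ 2 * Sτ) - μ ^ 2 * E from by ring)]
      simp only [Finset.sum_sub_distrib, Finset.sum_add_distrib, Finset.sum_const,
        nsmul_eq_mul, ← Finset.mul_sum]
      ring
    rw [Finset.sum_congr rfl h1]
    simp only [Finset.sum_sub_distrib, Finset.sum_add_distrib, Finset.sum_const,
      nsmul_eq_mul, ← Finset.mul_sum]
    ring
  -- sum over k
  have hsumall : μ ^ 2 * ((∑ k, ((V k).card : ℝ) * σsq k)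
      - (1 / (2 * wmin)) * (∑ k, ∑ a ∈ V k, ∑ b ∈ V k, (G.dist a b : ℝ) ^ 2 * Sτ)
      - (∑ k, ((V k).card : ℝ) ^ 2) * E)
      ≤ ∑ k, ∑ a ∈ V k, ∑ b ∈ V k, |Cx a b| := by
    have hsk := Finset.sum_le_sum (fun k (_ : k ∈ Finset.univ) => hsumk k)
    refine le_trans (le_of_eq ?_) hsk
    simp only [Finset.sum_sub_distrib, Finset.sum_const, nsmul_eq_mul, ← Finset.mul_sum,
      ← Finset.sum_mul]
    try ring
  have hN0 : ((N : ℝ)) ≠ 0 := Nat.cast_ne_zero.mpr (Nat.pos_iff_ne_zero.mp hN)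
  have hμ0 : μ ≠ 0 := ne_of_gt hμ
  have hw0 : wmin ≠ 0 := ne_of_gt hwpos
  rw [ge_iff_le]
  have hcoefpos : (0:ℝ) < 1 / ((N : ℝ) ^ 2 * μ ^ 2) := by positivity
  have h2 := mul_le_mul_of_nonneg_left hsumall hcoefpos.le
  refine le_trans (le_of_eq ?_) h2
  field_simp
  try ring
  simp only [mul_comm Sτ]
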